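/- In the two-state i.i.d. model with critical set J^(n) and N^(n) = |J^(n)|, the size N^(n) tends to infinity with high probability as n → ∞: there exists a constant λ > 0 such that P(N^(n) > (λ/2) n^{β/2}) → 1 as n → ∞. -/

import Mathlib

open Filter Set MeasureTheory ProbabilityTheory
open scoped Topology ENNReal

noncomputable section

/-- The uniform probability measure on the interval `[0, a]`. -/
def unifIcc (a : ℝ) : Measure ℝ :=
  (ENNReal.ofReal a)⁻¹ • (volume.restrict (Set.Icc 0 a))

/-- The critical set `J⁽ⁿ⁾` of the two-state i.i.d. model: the set of users `u` whose
parameter `p_u` satisfies `p₁ ≤ p_u ≤ p₁ + ε_n` and whose obfuscated parameter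
`Q_u = p_u + (1 - 2 p_u) R_u` satisfies `p₁ + ε_n ≤ Q_u ≤ p₁ + (1 - 2 p₁) a_n`. -/
def criticalSet {Ω : Type*} {n : ℕ} (P R : Fin n → Ω → ℝ) (p₁ ε a : ℝ) (ω : Ω) :
    Finset (Fin n) :=
  Finset.univ.filter (fun u =>
    (p₁ ≤ P u ω ∧ P u ω ≤ p₁ + ε) ∧
    p₁ + ε ≤ P u ω + (1 - 2 * P u ω) * R u ω ∧
    P u ω + (1 - 2 * P u ω) * R u ω ≤ p₁ + (1 - 2 * p₁) * a)

/-- The set of pairs (p, r) satisfying the critical conditions. -/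
def critPairSet (p₁ ε a : ℝ) : Set (ℝ × ℝ) :=
  {x | (p₁ ≤ x.1 ∧ x.1 ≤ p₁ + ε) ∧
    p₁ + ε ≤ x.1 + (1 - 2 * x.1) * x.2 ∧
    x.1 + (1 - 2 * x.1) * x.2 ≤ p₁ + (1 - 2 * p₁) * a}

lemma measurableSet_critPairSet (p₁ ε a : ℝ) : MeasurableSet (critPairSet p₁ ε a) := by
  have hQ : Measurable (fun x : ℝ × ℝ => x.1 + (1 - 2 * x.1) * x.2) := by fun_prop
  exact (((measurableSet_le measurable_const measurable_fst).inter
      (measurableSet_le measurable_fst measurable_const)).inter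
    ((measurableSet_le measurable_const hQ).inter (measurableSet_le hQ measurable_const)))

lemma indicator_preimage_one {α γ : Type*} (g : α → γ) (B : Set γ) :
    (g ⁻¹' B).indicator (fun _ => (1:ℝ)) = (B.indicator (fun _ => (1:ℝ))) ∘ g := by
  ext ω
  by_cases h : g ω ∈ B <;> simp [Set.indicator_apply, h]

/-- membership in the critical set -/
lemma mem_criticalSet_iff {Ω : Type*} {n : ℕ} (P R : Fin n → Ω → ℝ) (p₁ ε a : ℝ) (ω : Ω)
    (u : Fin n) :
    u ∈ criticalSet P R p₁ ε a ω ↔ (P u ω, R u ω) ∈ critPairSet p₁ ε a := by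
  simp [criticalSet, critPairSet]

lemma card_criticalSet_eq_sum {Ω : Type*} {n : ℕ} (P R : Fin n → Ω → ℝ) (p₁ ε a : ℝ) (ω : Ω) :
    ((criticalSet P R p₁ ε a ω).card : ℝ)
      = ∑ u : Fin n, ((fun ω' => (P u ω', R u ω')) ⁻¹' critPairSet p₁ ε a).indicator
          (fun _ => (1:ℝ)) ω := by
  rw [criticalSet, Finset.card_filter]
  push_cast
  refine Finset.sum_congr rfl fun u _ => ?_
  by_cases h : (p₁ ≤ P u ω ∧ P u ω ≤ p₁ + ε) ∧
      p₁ + ε ≤ P u ω + (1 - 2 * P u ω) * R u ω ∧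
      P u ω + (1 - 2 * P u ω) * R u ω ≤ p₁ + (1 - 2 * p₁) * a
  · rw [if_pos h]; exact (Set.indicator_of_mem h (fun _ => (1:ℝ))).symm
  · rw [if_neg h]; exact (Set.indicator_of_notMem h (fun _ => (1:ℝ))).symm

/-- The rectangle is contained in the critical pair set. -/
lemma rect_subset_critPairSet {p₁ ε a : ℝ} (h2p : 0 < 1 - 2 * p₁) (hε : 0 ≤ ε)
    (ha2 : a ≤ 1 / 2) :
    Set.Icc p₁ (p₁ + ε) ×ˢ Set.Icc ((1 - 2 * p₁)⁻¹ * ε) (a - (1 - 2 * p₁)⁻¹ * ε)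
      ⊆ critPairSet p₁ ε a := by
  rintro ⟨p, r⟩ ⟨⟨hp1, hp2⟩, hr1, hr2⟩
  have hcε : 0 ≤ (1 - 2 * p₁)⁻¹ * ε := mul_nonneg (le_of_lt (inv_pos.2 h2p)) hε
  have hr0 : 0 ≤ r := le_trans hcε hr1
  have hrhalf : r ≤ 1 / 2 := le_trans hr2 (by linarith)
  have key : (1 - 2 * p₁) * ((1 - 2 * p₁)⁻¹ * ε) = ε := by
    field_simp
  have h1 : ε ≤ (1 - 2 * p₁) * r := by
    calc ε = (1 - 2 * p₁) * ((1 - 2 * p₁)⁻¹ * ε) := key.symm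
    _ ≤ (1 - 2 * p₁) * r := by
        exact mul_le_mul_of_nonneg_left hr1 (le_of_lt h2p)
  have h2 : (1 - 2 * p₁)⁻¹ * ε ≤ a - r := by linarith
  have h3 : ε ≤ (1 - 2 * p₁) * (a - r) := by
    calc ε = (1 - 2 * p₁) * ((1 - 2 * p₁)⁻¹ * ε) := key.symm
    _ ≤ (1 - 2 * p₁) * (a - r) := mul_le_mul_of_nonneg_left h2 (le_of_lt h2p)
  refine ⟨⟨hp1, hp2⟩, ?_, ?_⟩
  · nlinarith [mul_nonneg (sub_nonneg.2 hp1) (by linarith : 0 ≤ 1 - 2 * r)]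
  · nlinarith [mul_nonneg (sub_nonneg.2 hp1) (by linarith : 0 ≤ 1 - 2 * r),
      mul_le_mul_of_nonneg_right (show p - p₁ ≤ ε by linarith) (by linarith : 0 ≤ 1 - 2*r),
      mul_le_one₀ (le_refl (1:ℝ)) (by linarith : 0 ≤ 1 - 2*r) (by linarith : 1 - 2*r ≤ 1)]

lemma measure_critEvent_ge {Ω : Type*} [MeasurableSpace Ω] (μ : Measure Ω)
    [IsProbabilityMeasure μ] (Pu Ru : Ω → ℝ) (hPu : Measurable Pu) (hRu : Measurable Ru)
    (hPR : IndepFun Pu Ru μ)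
    (f : ℝ → ℝ) (δ1 : ℝ) (hδ1 : 0 < δ1)
    (hf_in : ∀ x ∈ Set.Ioo (0:ℝ) 1, δ1 < f x)
    (p₁ ε a : ℝ)
    (hPlaw : Measure.map Pu μ = volume.withDensity (fun x => ENNReal.ofReal (f x)))
    (hRlaw : Measure.map Ru μ = unifIcc a)
    (hp₁0 : 0 ≤ p₁) (h2p : 0 < 1 - 2 * p₁) (hε : 0 ≤ ε) (ha2 : a ≤ 1 / 2)
    (hB : p₁ + ε ≤ 1) (hD : 4 * ((1 - 2 * p₁)⁻¹ * ε) ≤ a) (ha0 : 0 < a) :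
    ENNReal.ofReal (δ1 * ε / 2) ≤ μ ((fun ω => (Pu ω, Ru ω)) ⁻¹' critPairSet p₁ ε a) := by
  set l : ℝ := (1 - 2 * p₁)⁻¹ * ε with hl
  have hl0 : 0 ≤ l := mul_nonneg (inv_pos.2 h2p).le hε
  have hsub : Pu ⁻¹' Set.Icc p₁ (p₁ + ε) ∩ Ru ⁻¹' Set.Icc l (a - l)
      ⊆ (fun ω => (Pu ω, Ru ω)) ⁻¹' critPairSet p₁ ε a := by
    intro ω hω
    exact rect_subset_critPairSet h2p hε ha2 ⟨hω.1, hω.2⟩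
  have hmul : μ (Pu ⁻¹' Set.Icc p₁ (p₁ + ε) ∩ Ru ⁻¹' Set.Icc l (a - l))
      = μ (Pu ⁻¹' Set.Icc p₁ (p₁ + ε)) * μ (Ru ⁻¹' Set.Icc l (a - l)) :=
    (indepFun_iff_measure_inter_preimage_eq_mul.mp hPR) _ _ measurableSet_Icc measurableSet_Icc
  have hP : ENNReal.ofReal δ1 * ENNReal.ofReal ε ≤ μ (Pu ⁻¹' Set.Icc p₁ (p₁ + ε)) := by
    rw [← Measure.map_apply hPu measurableSet_Icc, hPlaw,
      withDensity_apply _ measurableSet_Icc]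
    calc ENNReal.ofReal δ1 * ENNReal.ofReal ε
        = ∫⁻ _ in Set.Ioo p₁ (p₁ + ε), ENNReal.ofReal δ1 := by
          rw [setLIntegral_const, Real.volume_Ioo, add_sub_cancel_left]
      _ ≤ ∫⁻ x in Set.Ioo p₁ (p₁ + ε), ENNReal.ofReal (f x) := by
          refine setLIntegral_mono' measurableSet_Ioo fun x hx => ?_
          exact ENNReal.ofReal_le_ofReal
            (hf_in x ⟨lt_of_le_of_lt hp₁0 hx.1, lt_of_lt_of_le hx.2 hB⟩).le
      _ ≤ ∫⁻ x in Set.Icc p₁ (p₁ + ε), ENNReal.ofReal (f x) :=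
          lintegral_mono' (Measure.restrict_mono Set.Ioo_subset_Icc_self le_rfl) le_rfl
  have hR : ENNReal.ofReal (1 / 2) ≤ μ (Ru ⁻¹' Set.Icc l (a - l)) := by
    rw [← Measure.map_apply hRu measurableSet_Icc, hRlaw, unifIcc, Measure.smul_apply,
      Measure.restrict_apply measurableSet_Icc, smul_eq_mul]
    have hss : Set.Icc l (a - l) ∩ Set.Icc 0 a = Set.Icc l (a - l) :=
      Set.inter_eq_left.2 (Set.Icc_subset_Icc hl0 (by linarith))
    rw [hss, Real.volume_Icc]
    have : (ENNReal.ofReal a)⁻¹ * ENNReal.ofReal (a - l - l)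
        = ENNReal.ofReal ((a - l - l) / a) := by
      rw [ENNReal.ofReal_div_of_pos ha0, div_eq_mul_inv, mul_comm]
    rw [this]
    refine ENNReal.ofReal_le_ofReal ?_
    rw [le_div_iff₀ ha0]
    linarith
  calc ENNReal.ofReal (δ1 * ε / 2)
      = ENNReal.ofReal δ1 * ENNReal.ofReal ε * ENNReal.ofReal (1 / 2) := by
        rw [← ENNReal.ofReal_mul hδ1.le, ← ENNReal.ofReal_mul (by positivity)]
        ring_nf
    _ ≤ μ (Pu ⁻¹' Set.Icc p₁ (p₁ + ε)) * μ (Ru ⁻¹' Set.Icc l (a - l)) := mul_le_mul' hP hR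
    _ = μ (Pu ⁻¹' Set.Icc p₁ (p₁ + ε) ∩ Ru ⁻¹' Set.Icc l (a - l)) := hmul.symm
    _ ≤ μ _ := measure_mono hsub

/-- Main per-`n` Chebyshev bound. -/
lemma main_bound {Ωn : Type*} [MeasurableSpace Ωn] (μ : Measure Ωn)
    [IsProbabilityMeasure μ] {n : ℕ} (P R : Fin n → Ωn → ℝ)
    (hPmeas : ∀ u, Measurable (P u)) (hRmeas : ∀ u, Measurable (R u))
    (hindep : iIndepFun (Sum.elim P R) μ)
    (f : ℝ → ℝ) (δ1 : ℝ) (hδ1 : 0 < δ1)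
    (hf_in : ∀ x ∈ Set.Ioo (0:ℝ) 1, δ1 < f x)
    (p₁ ε a : ℝ)
    (hPlaw : ∀ u : Fin n, (u : ℕ) ≠ 0 →
      Measure.map (P u) μ = volume.withDensity (fun x => ENNReal.ofReal (f x)))
    (hRlaw : ∀ u, Measure.map (R u) μ = unifIcc a)
    (hp₁0 : 0 ≤ p₁) (h2p : 0 < 1 - 2 * p₁) (hε0 : 0 ≤ ε) (hC : a ≤ 1 / 2)
    (hB : p₁ + ε ≤ 1) (hD : 4 * ((1 - 2 * p₁)⁻¹ * ε) ≤ a) (ha0 : 0 < a)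
    (hn1 : 1 ≤ n) (t : ℝ) (ht : 0 < t)
    (h2t : 2 * t ≤ ((n : ℝ) - 1) * (δ1 * ε / 2)) :
    μ {ω | ((criticalSet P R p₁ ε a ω).card : ℝ) ≤ t} ≤ ENNReal.ofReal (2 / t) := by
  classical
  set E : Fin n → Set Ωn := fun u => (fun ω => (P u ω, R u ω)) ⁻¹' critPairSet p₁ ε a with hE
  set X : Fin n → Ωn → ℝ := fun u => (E u).indicator (fun _ => (1:ℝ)) with hX
  set s : Finset (Fin n) := Finset.univ.filter (fun u => (u : ℕ) ≠ 0) with hs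
  set S : Ωn → ℝ := ∑ u ∈ s, X u with hSdef
  have hEmeas : ∀ u, MeasurableSet (E u) := fun u =>
    (measurableSet_critPairSet p₁ ε a).preimage ((hPmeas u).prodMk (hRmeas u))
  have hXmeas : ∀ u, Measurable (X u) := fun u =>
    measurable_const.indicator (hEmeas u)
  have hXmem : ∀ u, MemLp (X u) 2 μ := fun u =>
    memLp_indicator_const 2 (hEmeas u) 1 (Or.inr (measure_ne_top _ _))
  have hSmem : MemLp S 2 μ := by
    rw [hSdef]; exact memLp_finsetSum' _ fun u _ => hXmem u
  have hint : ∀ u, ∫ ω, X u ω ∂μ = (μ (E u)).toReal := fun u => by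
    rw [hX]
    rw [integral_indicator_const (1:ℝ) (hEmeas u), smul_eq_mul, mul_one, measureReal_def]
  have hq : ∀ u ∈ s, ENNReal.ofReal (δ1 * ε / 2) ≤ μ (E u) := by
    intro u hu
    have hu0 : (u : ℕ) ≠ 0 := by
      rw [hs] at hu; exact (Finset.mem_filter.mp hu).2
    have hPR : IndepFun (P u) (R u) μ := by
      have := hindep.indepFun (i := Sum.inl u) (j := Sum.inr u) (by simp)
      exact this
    exact measure_critEvent_ge μ (P u) (R u) (hPmeas u) (hRmeas u) hPR f δ1 hδ1
      hf_in p₁ ε a (hPlaw u hu0) (hRlaw u) hp₁0 h2p hε0 hC hB hD ha0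
  have hqr : ∀ u ∈ s, δ1 * ε / 2 ≤ (μ (E u)).toReal := by
    intro u hu
    have h1 : (ENNReal.ofReal (δ1 * ε / 2)).toReal = δ1 * ε / 2 :=
      ENNReal.toReal_ofReal (by positivity)
    rw [← h1]
    exact ENNReal.toReal_mono (measure_ne_top _ _) (hq u hu)
  have hcard : ((s.card : ℝ)) = (n : ℝ) - 1 := by
    have h0 : Finset.univ.filter (fun u : Fin n => (u : ℕ) = 0)
        = {(⟨0, by omega⟩ : Fin n)} := by
      ext v; simp [Fin.ext_iff]
    have h1 : s = Finset.univ \ Finset.univ.filter (fun u : Fin n => (u : ℕ) = 0) := by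
      rw [hs, ← Finset.filter_not]
    have h2 : s.card = n - 1 := by
      rw [h1, Finset.card_sdiff_of_subset (Finset.filter_subset _ _), h0]
      simp
    rw [h2, Nat.cast_sub hn1, Nat.cast_one]
  have hmval : μ[S] = ∑ u ∈ s, (μ (E u)).toReal := by
    rw [hSdef]
    have : ∫ ω, (∑ u ∈ s, X u) ω ∂μ = ∫ ω, ∑ u ∈ s, X u ω ∂μ := by
      congr 1; funext ω; exact Finset.sum_apply _ _ _
    rw [this, integral_finset_sum _ fun u _ => (hXmem u).integrable one_le_two]
    exact Finset.sum_congr rfl fun u _ => hint u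
  have hmlb : 2 * t ≤ μ[S] := by
    rw [hmval]
    refine h2t.trans ?_
    have := Finset.card_nsmul_le_sum s (fun u => (μ (E u)).toReal) (δ1 * ε / 2) hqr
    rw [nsmul_eq_mul, hcard] at this
    exact this
  have hmpos : 0 < μ[S] := lt_of_lt_of_le (by linarith) hmlb
  have hpairwise : Set.Pairwise ↑s fun u v => IndepFun (X u) (X v) μ := by
    intro u _ v _ huv
    have hfmeas : ∀ i, Measurable (Sum.elim P R i) := by
      rintro (w | w)
      · exact hPmeas w
      · exact hRmeas w
    have h4 := hindep.indepFun_prodMk_prodMk hfmeas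
      (Sum.inl u) (Sum.inr u) (Sum.inl v) (Sum.inr v)
      (by simp [huv]) (by simp) (by simp) (by simp [huv])
    have hφ : Measurable ((critPairSet p₁ ε a).indicator (fun _ => (1:ℝ))) :=
      measurable_const.indicator (measurableSet_critPairSet p₁ ε a)
    have hXeq : ∀ w : Fin n, X w
        = ((critPairSet p₁ ε a).indicator (fun _ => (1:ℝ)))
          ∘ (fun ω => (P w ω, R w ω)) := fun w => indicator_preimage_one _ _
    rw [hXeq u, hXeq v]
    exact h4.comp hφ hφ
  have hXsq : ∀ u, (X u) ^ 2 = X u := by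
    intro u
    funext ω
    by_cases h : ω ∈ E u <;> simp [hX, Set.indicator_apply, h]
  have hvar : variance S μ ≤ μ[S] := by
    rw [hSdef, IndepFun.variance_sum (fun u _ => hXmem u) hpairwise, ← hSdef, hmval]
    refine Finset.sum_le_sum fun u hu => ?_
    calc variance (X u) μ ≤ μ[(X u) ^ 2] :=
          variance_le_expectation_sq (hXmeas u).aestronglyMeasurable
      _ = (μ (E u)).toReal := by rw [hXsq u]; exact hint u
  have hSY : ∀ ω, S ω ≤ ((criticalSet P R p₁ ε a ω).card : ℝ) := by
    intro ω
    rw [card_criticalSet_eq_sum]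
    calc S ω = ∑ u ∈ s, ((fun ω' => (P u ω', R u ω')) ⁻¹' critPairSet p₁ ε a).indicator
          (fun _ => (1:ℝ)) ω := by
          rw [hSdef]; exact Finset.sum_apply _ _ _
      _ ≤ ∑ u : Fin n, ((fun ω' => (P u ω', R u ω')) ⁻¹' critPairSet p₁ ε a).indicator
          (fun _ => (1:ℝ)) ω := by
          refine Finset.sum_le_sum_of_subset_of_nonneg (Finset.subset_univ _) ?_
          intro i _ _
          exact Set.indicator_nonneg (fun _ _ => zero_le_one) ω
  have hset : {ω | ((criticalSet P R p₁ ε a ω).card : ℝ) ≤ t}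
      ⊆ {ω | μ[S] / 2 ≤ |S ω - μ[S]|} := by
    intro ω hω
    simp only [Set.mem_setOf_eq] at hω ⊢
    have h1 : S ω ≤ t := (hSY ω).trans hω
    rw [abs_sub_comm]
    refine le_trans (by linarith) (le_abs_self _)
  calc μ {ω | ((criticalSet P R p₁ ε a ω).card : ℝ) ≤ t}
      ≤ μ {ω | μ[S] / 2 ≤ |S ω - μ[S]|} := measure_mono hset
    _ ≤ ENNReal.ofReal (variance S μ / (μ[S] / 2) ^ 2) :=
        meas_ge_le_variance_div_sq hSmem (by linarith)
    _ ≤ ENNReal.ofReal (2 / t) := by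
        refine ENNReal.ofReal_le_ofReal ?_
        have hd : (0:ℝ) < (μ[S] / 2) ^ 2 := by positivity
        have h1 : variance S μ / (μ[S] / 2) ^ 2 ≤ μ[S] / (μ[S] / 2) ^ 2 :=
          by gcongr
        have h2 : μ[S] / (μ[S] / 2) ^ 2 = 4 / μ[S] := by
          field_simp
          ring
        have h3 : 4 / μ[S] ≤ 4 / (2 * t) :=
          div_le_div_of_nonneg_left (by norm_num) (by linarith) hmlb
        have h4 : 4 / (2 * t) = 2 / t := by
          rw [div_eq_div_iff (by linarith) (by linarith)]
          ring
        linarith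

/-- **The critical set grows without bound.**  In the two-state i.i.d. model (user `1`'s
parameter conditioned to equal `p₁` with `0 ≤ p₁ < 1/2`, the other users' parameters i.i.d.
with density `f_P` bounded between `δ₁` and `δ₂` on `(0,1)`, obfuscation noise
`R_u ~ Uniform[0, a_n]` with `a_n = c' n^{-(1-β)}`, and `ε_n = n^{-(1-β/2)}`), the size
`N⁽ⁿ⁾ = |J⁽ⁿ⁾|` of the critical set tends to infinity with high probability: there is a
`λ > 0` with `P(N⁽ⁿ⁾ > (λ/2) n^{β/2}) → 1` as `n → ∞`. -/
theorem critical_set_size_tendsto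
    (f : ℝ → ℝ) (δ1 δ2 : ℝ) (hδ1 : 0 < δ1)
    (hf_in : ∀ x ∈ Set.Ioo (0:ℝ) 1, δ1 < f x ∧ f x < δ2)
    (hf_out : ∀ x, x ∉ Set.Ioo (0:ℝ) 1 → f x = 0)
    (p₁ : ℝ) (hp₁0 : 0 ≤ p₁) (hp₁ : p₁ < 1 / 2)
    (c' β : ℝ) (hc' : 0 < c') (hβ0 : 0 < β) (hβ1 : β < 1)
    (a ε : ℕ → ℝ)
    (ha : ∀ n, a n = c' * (n : ℝ) ^ (-(1 - β)))
    (hε : ∀ n, ε n = (n : ℝ) ^ (-(1 - β / 2)))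
    (Ω : ℕ → Type) (mΩ : ∀ n, MeasurableSpace (Ω n))
    (μ : (n : ℕ) → Measure (Ω n)) (hprob : ∀ n, IsProbabilityMeasure (μ n))
    (P R : (n : ℕ) → Fin n → Ω n → ℝ)
    (hPmeas : ∀ n u, Measurable (P n u)) (hRmeas : ∀ n u, Measurable (R n u))
    -- the parameters `p_u` and the noise probabilities `R_u` are all mutually independent,
    (hindep : ∀ n, iIndepFun
      (Sum.elim (P n) (R n)) (μ n))
    -- user `1`'s parameter is (conditioned to be) `p₁`,
    (hPlaw1 : ∀ n, ∀ u : Fin n, (u : ℕ) = 0 →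
      Measure.map (P n u) (μ n) = Measure.dirac p₁)
    -- the other users' parameters are i.i.d. with density `f_P`,
    (hPlaw : ∀ n, ∀ u : Fin n, (u : ℕ) ≠ 0 →
      Measure.map (P n u) (μ n) = volume.withDensity (fun x => ENNReal.ofReal (f x)))
    -- the noise probabilities are uniform on `[0, a_n]`:
    (hRlaw : ∀ n u, Measure.map (R n u) (μ n) = unifIcc (a n)) :
    ∃ lam > (0:ℝ),
      Tendsto (fun n => μ n {ω |
          lam / 2 * (n : ℝ) ^ (β / 2)
            < ((criticalSet (P n) (R n) p₁ (ε n) (a n) ω).card : ℝ)})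
        atTop (nhds 1) := by
  classical
  have h2p : 0 < 1 - 2 * p₁ := by linarith
  refine ⟨δ1 / 4, by positivity, ?_⟩
  have hYmeas : ∀ n, Measurable
      (fun ω => ((criticalSet (P n) (R n) p₁ (ε n) (a n) ω).card : ℝ)) := by
    intro n
    have heq : (fun ω => ((criticalSet (P n) (R n) p₁ (ε n) (a n) ω).card : ℝ))
        = fun ω => ∑ u : Fin n,
            ((fun ω' => (P n u ω', R n u ω')) ⁻¹' critPairSet p₁ (ε n) (a n)).indicator
              (fun _ => (1:ℝ)) ω := by
      funext ω; exact card_criticalSet_eq_sum (P n) (R n) p₁ (ε n) (a n) ω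
    rw [heq]
    refine Finset.measurable_sum _ fun u _ => ?_
    exact measurable_const.indicator
      ((measurableSet_critPairSet _ _ _).preimage ((hPmeas n u).prodMk (hRmeas n u)))
  have hcast : Tendsto (fun n : ℕ => (n : ℝ)) atTop atTop := tendsto_natCast_atTop_atTop
  have hε0' : ∀ n : ℕ, 0 ≤ ε n := fun n => by
    rw [hε]; exact Real.rpow_nonneg (Nat.cast_nonneg n) _
  have hεto : Tendsto ε atTop (𝓝 0) := by
    have h := (tendsto_rpow_neg_atTop (show (0:ℝ) < 1 - β / 2 by linarith)).comp hcast
    exact h.congr fun n => by simp only [Function.comp_apply]; exact (hε n).symm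
  have hato : Tendsto a atTop (𝓝 0) := by
    have h := ((tendsto_rpow_neg_atTop (show (0:ℝ) < 1 - β by linarith)).comp
      hcast).const_mul c'
    rw [mul_zero] at h
    exact h.congr fun n => by simp only [Function.comp_apply]; exact (ha n).symm
  have hev2 : ∀ᶠ n : ℕ in atTop, p₁ + ε n ≤ 1 := by
    filter_upwards [hεto.eventually_lt_const (show (0:ℝ) < 1 - p₁ by linarith)] with n hn
    linarith
  have hev3 : ∀ᶠ n : ℕ in atTop, a n ≤ 1 / 2 := by
    filter_upwards [hato.eventually_lt_const (show (0:ℝ) < 1 / 2 by norm_num)] with n hn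
    linarith
  have hev4 : ∀ᶠ n : ℕ in atTop, 4 * ((1 - 2 * p₁)⁻¹ * ε n) ≤ a n := by
    have hc4 : Tendsto (fun n : ℕ => 4 * (1 - 2 * p₁)⁻¹ * (n:ℝ) ^ (-(β / 2)))
        atTop (𝓝 0) := by
      have h := ((tendsto_rpow_neg_atTop (show (0:ℝ) < β / 2 by linarith)).comp
        hcast).const_mul (4 * (1 - 2 * p₁)⁻¹)
      rw [mul_zero] at h
      exact h.congr fun n => by simp only [Function.comp_apply]
    filter_upwards [hc4.eventually_lt_const hc', eventually_ge_atTop 1] with n h1 h2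
    have hn0 : (0:ℝ) < n := by exact_mod_cast Nat.pos_of_ne_zero (by omega)
    have hsplit : ε n = (n:ℝ) ^ (-(1 - β)) * (n:ℝ) ^ (-(β / 2)) := by
      rw [hε, ← Real.rpow_add hn0]; ring_nf
    have hpow : (0:ℝ) ≤ (n:ℝ) ^ (-(1 - β)) := Real.rpow_nonneg (Nat.cast_nonneg n) _
    calc 4 * ((1 - 2 * p₁)⁻¹ * ε n)
        = (n:ℝ) ^ (-(1 - β)) * (4 * (1 - 2 * p₁)⁻¹ * (n:ℝ) ^ (-(β / 2))) := by
          rw [hsplit]; ring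
      _ ≤ (n:ℝ) ^ (-(1 - β)) * c' := mul_le_mul_of_nonneg_left h1.le hpow
      _ = a n := by rw [ha]; ring
  have hbound : ∀ᶠ n : ℕ in atTop,
      μ n {ω | ((criticalSet (P n) (R n) p₁ (ε n) (a n) ω).card : ℝ)
          ≤ δ1 / 4 / 2 * (n:ℝ) ^ (β / 2)}
        ≤ ENNReal.ofReal (16 / δ1 * (n:ℝ) ^ (-(β / 2))) := by
    filter_upwards [eventually_ge_atTop 2, hev2, hev3, hev4] with n hn2 h2 h3 h4
    haveI := hprob n
    have hn1 : 1 ≤ n := by omega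
    have hn0 : (0:ℝ) < n := by exact_mod_cast Nat.pos_of_ne_zero (by omega)
    have hnn : (2:ℝ) ≤ n := by exact_mod_cast hn2
    have hppos : (0:ℝ) < (n:ℝ) ^ (β / 2) := Real.rpow_pos_of_pos hn0 _
    have ht : 0 < δ1 / 4 / 2 * (n:ℝ) ^ (β / 2) := by positivity
    have ha0 : 0 < a n := by
      rw [ha]; exact mul_pos hc' (Real.rpow_pos_of_pos hn0 _)
    have hne : (n:ℝ) * ε n = (n:ℝ) ^ (β / 2) := by
      rw [hε]
      nth_rewrite 1 [← Real.rpow_one (n:ℝ)]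
      rw [← Real.rpow_add hn0]
      ring_nf
    have h2t : 2 * (δ1 / 4 / 2 * (n:ℝ) ^ (β / 2)) ≤ ((n:ℝ) - 1) * (δ1 * ε n / 2) := by
      have h5 : (n:ℝ) / 2 ≤ (n:ℝ) - 1 := by linarith
      calc 2 * (δ1 / 4 / 2 * (n:ℝ) ^ (β / 2)) = ((n:ℝ) / 2) * (δ1 * ε n / 2) := by
            rw [← hne]; ring
        _ ≤ ((n:ℝ) - 1) * (δ1 * ε n / 2) :=
            mul_le_mul_of_nonneg_right h5 (by
              have := hε0' n; positivity)
    have hmb := main_bound (μ n) (P n) (R n) (hPmeas n) (hRmeas n) (hindep n) f δ1 hδ1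
      (fun x hx => (hf_in x hx).1) p₁ (ε n) (a n) (hPlaw n) (hRlaw n) hp₁0 h2p
      (hε0' n) h3 h2 h4 ha0 hn1 _ ht h2t
    refine hmb.trans (le_of_eq ?_)
    congr 1
    rw [Real.rpow_neg (Nat.cast_nonneg n)]
    field_simp
    ring
  have hzero : Tendsto (fun n : ℕ =>
      μ n {ω | ((criticalSet (P n) (R n) p₁ (ε n) (a n) ω).card : ℝ)
        ≤ δ1 / 4 / 2 * (n:ℝ) ^ (β / 2)}) atTop (𝓝 0) := by
    have hb0 : Tendsto (fun n : ℕ => ENNReal.ofReal (16 / δ1 * (n:ℝ) ^ (-(β / 2))))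
        atTop (𝓝 0) := by
      have h := ((tendsto_rpow_neg_atTop (show (0:ℝ) < β / 2 by linarith)).comp
        hcast).const_mul (16 / δ1)
      rw [mul_zero] at h
      simpa using ENNReal.tendsto_ofReal h
    exact tendsto_of_tendsto_of_tendsto_of_le_of_le' tendsto_const_nhds hb0
      (Eventually.of_forall fun n => zero_le) hbound
  have hcompl : ∀ n : ℕ,
      μ n {ω | δ1 / 4 / 2 * (n:ℝ) ^ (β / 2)
          < ((criticalSet (P n) (R n) p₁ (ε n) (a n) ω).card : ℝ)}
        = 1 - μ n {ω | ((criticalSet (P n) (R n) p₁ (ε n) (a n) ω).card : ℝ)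
          ≤ δ1 / 4 / 2 * (n:ℝ) ^ (β / 2)} := by
    intro n
    haveI := hprob n
    have hms : MeasurableSet {ω | ((criticalSet (P n) (R n) p₁ (ε n) (a n) ω).card : ℝ)
        ≤ δ1 / 4 / 2 * (n:ℝ) ^ (β / 2)} := measurableSet_le (hYmeas n) measurable_const
    have hseteq : {ω | δ1 / 4 / 2 * (n:ℝ) ^ (β / 2)
        < ((criticalSet (P n) (R n) p₁ (ε n) (a n) ω).card : ℝ)}
        = {ω | ((criticalSet (P n) (R n) p₁ (ε n) (a n) ω).card : ℝ)
          ≤ δ1 / 4 / 2 * (n:ℝ) ^ (β / 2)}ᶜ := by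
      ext ω; simp [not_le]
    rw [hseteq, prob_compl_eq_one_sub hms]
  have hfin := ENNReal.Tendsto.sub (tendsto_const_nhds (x := (1:ℝ≥0∞))) hzero
    (Or.inl ENNReal.one_ne_top)
  rw [tsub_zero] at hfin
  exact hfin.congr fun n => (hcompl n).symm

end
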